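/- Let L be a positive integer and let Q = {x ∈ ℝⁿ : L − 1/2 < x_n < L + 1/2}. For every bit vector a ∈ {0,1}ⁿ: if S(a) ≠ L then the n-dimensional Lebesgue volume of R_{a,n} ∩ Q equals 0, and if S(a) = L then the n-dimensional Lebesgue volume of R_{a,n} ∩ Q equals (1/n)ⁿ (equivalently, R_{a,n} ⊆ Q in that case). -/

import Mathlib

open MeasureTheory
open scoped ENNReal

noncomputable section

/-- The chain region `R_{a,k} ⊆ ℝᵏ` : the set of points `(x₁,…,x_k)` with
`a₁s₁ − 1/(2n) < x₁ < a₁s₁ + 1/(2n)` and, for `2 ≤ i ≤ k`,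
`x_{i−1} + a_i s_i − 1/(2n) < x_i < x_{i−1} + a_i s_i + 1/(2n)`
(indices here are 0-based). -/
def chainRegion (n k : ℕ) (hk : k ≤ n) (s : Fin n → ℕ) (a : Fin n → Bool) :
    Set (Fin k → ℝ) :=
  {x | ∀ i : Fin k,
    (if 0 < (i : ℕ) then x ⟨(i : ℕ) - 1, Nat.lt_of_le_of_lt (Nat.sub_le _ _) i.isLt⟩ else 0) +
        (if a (Fin.castLE hk i) then (s (Fin.castLE hk i) : ℝ) else 0) - 1 / (2 * (n : ℝ))
      < x i ∧
    x i <
      (if 0 < (i : ℕ) then x ⟨(i : ℕ) - 1, Nat.lt_of_le_of_lt (Nat.sub_le _ _) i.isLt⟩ else 0) +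
        (if a (Fin.castLE hk i) then (s (Fin.castLE hk i) : ℝ) else 0) + 1 / (2 * (n : ℝ))}

/-- The difference matrix: lower bidiagonal with `1` on the diagonal and `-1` just below. -/
def diffM (n : ℕ) : Matrix (Fin n) (Fin n) ℝ :=
  fun i j => if j = i then 1 else if (j : ℕ) + 1 = (i : ℕ) then -1 else 0

lemma diffM_det (n : ℕ) : (diffM n).det = 1 := by
  rw [Matrix.det_of_lowerTriangular (diffM n)]
  · simp [diffM]
  · intro i j h
    simp only [OrderDual.toDual_lt_toDual] at h
    simp only [diffM]
    rw [if_neg, if_neg] <;> omega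

lemma diffM_mulVec (n : ℕ) (x : Fin n → ℝ) (i : Fin n) :
    (diffM n).mulVec x i =
      x i - (if 0 < (i : ℕ) then x ⟨(i : ℕ) - 1,
        Nat.lt_of_le_of_lt (Nat.sub_le _ _) i.isLt⟩ else 0) := by
  rw [Matrix.mulVec, dotProduct]
  have hsplit : ∀ j : Fin n, diffM n i j * x j =
      (if j = i then x j else 0) + (if (j : ℕ) + 1 = (i : ℕ) then -x j else 0) := by
    intro j
    simp only [diffM]
    by_cases h1 : j = i
    · subst h1
      rw [if_pos rfl, if_pos rfl, if_neg (by omega)]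
      ring
    · rw [if_neg h1, if_neg h1]
      by_cases h2 : (j : ℕ) + 1 = (i : ℕ)
      · rw [if_pos h2, if_pos h2]; ring
      · rw [if_neg h2, if_neg h2]; ring
  rw [Finset.sum_congr rfl fun j _ => hsplit j, Finset.sum_add_distrib]
  rw [Finset.sum_ite_eq' Finset.univ i x]
  simp only [Finset.mem_univ, if_pos]
  by_cases h : 0 < (i : ℕ)
  · rw [if_pos h]
    have : ∀ j : Fin n, (if (j : ℕ) + 1 = (i : ℕ) then -x j else 0) =
        (if j = (⟨(i : ℕ) - 1, Nat.lt_of_le_of_lt (Nat.sub_le _ _) i.isLt⟩ : Fin n)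
          then -x j else 0) := by
      intro j
      refine if_congr ?_ rfl rfl
      simp only [Fin.ext_iff, Fin.val_mk]
      omega
    rw [Finset.sum_congr rfl fun j _ => this j,
      Finset.sum_ite_eq' Finset.univ _ (fun j => -x j)]
    simp only [Finset.mem_univ, if_pos]
    ring
  · rw [if_neg h]
    have : ∀ j : Fin n, (if (j : ℕ) + 1 = (i : ℕ) then -x j else 0) = 0 := by
      intro j; rw [if_neg (by omega)]
    rw [Finset.sum_congr rfl fun j _ => this j]
    simp

/-- Telescoping: the sum of successive differences is the last coordinate. -/
lemma diffM_sum (n : ℕ) (hn : 0 < n) (x : Fin n → ℝ) :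
    ∑ i : Fin n, (diffM n).mulVec x i = x ⟨n - 1, Nat.sub_lt hn one_pos⟩ := by
  set g : ℕ → ℝ := fun j => if h : 0 < j ∧ j ≤ n then x ⟨j - 1, by omega⟩ else 0 with hg
  have h1 : ∀ i : Fin n, (diffM n).mulVec x i = g ((i : ℕ) + 1) - g (i : ℕ) := by
    intro i
    rw [diffM_mulVec]
    have hg1 : g ((i : ℕ) + 1) = x i := by
      simp only [hg]
      rw [dif_pos ⟨Nat.succ_pos _, i.isLt⟩]
      congr 1
    have hg2 : g (i : ℕ) = if 0 < (i : ℕ) then x ⟨(i : ℕ) - 1,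
        Nat.lt_of_le_of_lt (Nat.sub_le _ _) i.isLt⟩ else 0 := by
      simp only [hg]
      by_cases h : 0 < (i : ℕ)
      · rw [dif_pos ⟨h, i.isLt.le⟩, if_pos h]
      · rw [dif_neg (fun hc => h hc.1), if_neg h]
    rw [hg1, hg2]
  rw [Finset.sum_congr rfl fun i _ => h1 i]
  rw [Fin.sum_univ_eq_sum_range (fun j => g (j + 1) - g j) n]
  rw [Finset.sum_range_sub g n]
  have hgn : g n = x ⟨n - 1, Nat.sub_lt hn one_pos⟩ := by
    simp only [hg]
    rw [dif_pos ⟨hn, le_rfl⟩]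
  have hg0 : g 0 = 0 := by
    simp only [hg]
    rw [dif_neg (fun hc => absurd hc.1 (lt_irrefl 0))]
  rw [hgn, hg0, sub_zero]

theorem chainRegion_query (n : ℕ) (hn : 0 < n) (s : Fin n → ℕ) (hs : ∀ i, 0 < s i)
    (a : Fin n → Bool) (L : ℕ) (hL : 0 < L) :
    let Q : Set (Fin n → ℝ) :=
      {x | (L : ℝ) - 1 / 2 < x ⟨n - 1, Nat.sub_lt hn one_pos⟩ ∧
           x ⟨n - 1, Nat.sub_lt hn one_pos⟩ < (L : ℝ) + 1 / 2}
    ((∑ i : Fin n, if a i then s i else 0) ≠ L →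
        volume (chainRegion n n le_rfl s a ∩ Q) = 0) ∧
    ((∑ i : Fin n, if a i then s i else 0) = L →
        chainRegion n n le_rfl s a ⊆ Q ∧
        volume (chainRegion n n le_rfl s a ∩ Q) = (1 / (n : ℝ≥0∞)) ^ n) := by
  intro Q
  have hne : (n : ℝ) ≠ 0 := Nat.cast_ne_zero.mpr hn.ne'
  set ε : ℝ := 1 / (2 * (n : ℝ)) with hεdef
  set b : Fin n → ℝ := fun i => if a i then (s i : ℝ) else 0 with hb
  set T : (Fin n → ℝ) →ₗ[ℝ] (Fin n → ℝ) := Matrix.toLin' (diffM n) with hT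
  have hTapp : ∀ x : Fin n → ℝ, T x = (diffM n).mulVec x := fun x => by
    rw [hT, Matrix.toLin'_apply]
  have hdet : LinearMap.det T = 1 := by
    rw [hT, LinearMap.det_toLin', diffM_det]
  -- the chain region is the preimage of a box under T
  have hset : chainRegion n n le_rfl s a =
      T ⁻¹' (Set.pi Set.univ fun i => Set.Ioo (b i - ε) (b i + ε)) := by
    ext x
    simp only [chainRegion, Set.mem_setOf_eq, Set.mem_preimage, Set.mem_pi, Set.mem_univ,
      true_implies, Set.mem_Ioo, hTapp, diffM_mulVec]
    refine forall_congr' fun i => ?_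
    have hcast : Fin.castLE (le_refl n) i = i := Fin.ext rfl
    rw [hcast]
    constructor <;> rintro ⟨h1, h2⟩ <;> constructor <;>
      simp only [hb] at * <;> linarith
  -- bound on the last coordinate
  have hbound : ∀ x ∈ chainRegion n n le_rfl s a,
      (∑ i, b i) - 1 / 2 < x ⟨n - 1, Nat.sub_lt hn one_pos⟩ ∧
      x ⟨n - 1, Nat.sub_lt hn one_pos⟩ < (∑ i, b i) + 1 / 2 := by
    intro x hx
    rw [hset] at hx
    simp only [Set.mem_preimage, Set.mem_pi, Set.mem_univ, true_implies, Set.mem_Ioo,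
      hTapp] at hx
    have hnonempty : (Finset.univ : Finset (Fin n)).Nonempty :=
      Finset.univ_nonempty_iff.mpr (Fin.pos_iff_nonempty.mp hn)
    have h1 : ∑ i : Fin n, (b i - ε) < ∑ i : Fin n, (diffM n).mulVec x i :=
      Finset.sum_lt_sum_of_nonempty hnonempty fun i _ => (hx i).1
    have h2 : ∑ i : Fin n, (diffM n).mulVec x i < ∑ i : Fin n, (b i + ε) :=
      Finset.sum_lt_sum_of_nonempty hnonempty fun i _ => (hx i).2
    rw [diffM_sum n hn x] at h1 h2
    have hsum1 : ∑ i : Fin n, (b i - ε) = (∑ i, b i) - 1 / 2 := by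
      rw [Finset.sum_sub_distrib, Finset.sum_const, Finset.card_univ, Fintype.card_fin]
      congr 1
      rw [hεdef]
      field_simp
      ring_nf
      exact mul_inv_cancel₀ hne
    have hsum2 : ∑ i : Fin n, (b i + ε) = (∑ i, b i) + 1 / 2 := by
      rw [Finset.sum_add_distrib, Finset.sum_const, Finset.card_univ, Fintype.card_fin]
      congr 1
      rw [hεdef]
      field_simp
      ring_nf
      exact mul_inv_cancel₀ hne
    rw [hsum1] at h1
    rw [hsum2] at h2
    exact ⟨h1, h2⟩
  have hS : ∑ i, b i = ((∑ i : Fin n, if a i then s i else 0 : ℕ) : ℝ) := by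
    rw [Nat.cast_sum]
    refine Finset.sum_congr rfl fun i _ => ?_
    simp only [hb]
    by_cases h : a i
    · rw [if_pos h, if_pos h]
    · rw [if_neg h, if_neg h, Nat.cast_zero]
  -- volume of the chain region
  have hvol : volume (chainRegion n n le_rfl s a) = (1 / (n : ℝ≥0∞)) ^ n := by
    rw [hset, Measure.addHaar_preimage_linearMap volume (by rw [hdet]; exact one_ne_zero),
      hdet, volume_pi_pi]
    have hIoo : ∀ i : Fin n, volume (Set.Ioo (b i - ε) (b i + ε)) = 1 / (n : ℝ≥0∞) := by
      intro i
      rw [Real.volume_Ioo]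
      have : b i + ε - (b i - ε) = 1 / (n : ℝ) := by
        rw [hεdef, one_div, mul_inv, one_div]; ring
      rw [this, one_div, one_div,
        ENNReal.ofReal_inv_of_pos (Nat.cast_pos.mpr hn), ENNReal.ofReal_natCast]
    rw [Finset.prod_congr rfl fun i _ => hIoo i]
    simp
  constructor
  · -- S ≠ L : the intersection is empty
    intro hSL
    have hempty : chainRegion n n le_rfl s a ∩ Q = ∅ := by
      ext x
      simp only [Set.mem_inter_iff, Set.mem_empty_iff_false, iff_false, not_and]
      intro hx hq
      obtain ⟨h1, h2⟩ := hbound x hx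
      obtain ⟨hq1, hq2⟩ := hq
      rw [hS] at h1 h2
      apply hSL
      have e1 : ((∑ i : Fin n, if a i then s i else 0 : ℕ) : ℝ) < (L : ℝ) + 1 := by linarith
      have e2 : ((L : ℝ)) < ((∑ i : Fin n, if a i then s i else 0 : ℕ) : ℝ) + 1 := by linarith
      have e1' : (∑ i : Fin n, if a i then s i else 0) < L + 1 := by exact_mod_cast e1
      have e2' : L < (∑ i : Fin n, if a i then s i else 0) + 1 := by exact_mod_cast e2
      omega
    rw [hempty]
    simp
  · -- S = L
    intro hSL
    have hsub : chainRegion n n le_rfl s a ⊆ Q := by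
      intro x hx
      obtain ⟨h1, h2⟩ := hbound x hx
      rw [hS, hSL] at h1 h2
      exact ⟨h1, h2⟩
    refine ⟨hsub, ?_⟩
    rw [Set.inter_eq_left.mpr hsub, hvol]
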